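/- arXiv:2106.13470 — 3 statements merged into one kernel-verified Lean document; each statement's English description precedes it below -/
import Mathlib

section
/- Under the localized frame setup, the Ω-assumptions, and the decay assumption on Θ, the following holds: for every ε > 0 there exists a compact set M ⊆ ℝ^n, depending only on ε, Ω, and the setup data (not on f), such that every f = Σ_{γ∈Γ} c_γ F_γ ∈ V admits the truncation f̃ = Σ_{γ∈Γ∩M} c_γ F_γ ∈ V_M satisfying |f(x) − f̃(x)| ≤ (ε/μ(Ω)) ‖f‖_{L^p(ℝ^n)} for all x ∈ Ω, and consequently ‖f − f̃‖_{L^p(Ω)} ≤ ε ‖f‖_{L^p(ℝ^n)}. -/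
open MeasureTheory Set
open scoped Classical

private lemma fiber_tsum_le {ι κ : Type*} (g : κ → ℝ) (hg0 : ∀ k, 0 ≤ g k)
    (hg : Summable g) (φ : ι → κ) (K : ℕ)
    (hfib : ∀ (k : κ) (v : Finset ι), (∀ i ∈ v, φ i = k) → v.card ≤ K)
    (h : ι → ℝ) (h0 : ∀ i, 0 ≤ h i) (hle : ∀ i, h i ≤ g (φ i)) :
    Summable h ∧ ∑' i, h i ≤ K * ∑' k, g k := by
  classical
  have key : ∀ u : Finset ι, ∑ i ∈ u, h i ≤ K * ∑' k, g k := by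
    intro u
    have h1 : ∑ i ∈ u, h i ≤ ∑ i ∈ u, g (φ i) := Finset.sum_le_sum fun i _ => hle i
    have h2 : ∑ k ∈ u.image φ, ∑ i ∈ u.filter (fun i => φ i = k), g k = ∑ i ∈ u, g (φ i) :=
      Finset.sum_fiberwise_of_maps_to' (fun i hi => Finset.mem_image_of_mem φ hi) g
    have h3 : ∀ k ∈ u.image φ, ∑ i ∈ u.filter (fun i => φ i = k), g k ≤ (K : ℝ) * g k := by
      intro k _
      rw [Finset.sum_const, nsmul_eq_mul]
      exact mul_le_mul_of_nonneg_right
        (Nat.cast_le.2 (hfib k _ (fun i hi => (Finset.mem_filter.1 hi).2))) (hg0 k)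
    calc ∑ i ∈ u, h i ≤ ∑ i ∈ u, g (φ i) := h1
      _ = ∑ k ∈ u.image φ, ∑ i ∈ u.filter (fun i => φ i = k), g k := h2.symm
      _ ≤ ∑ k ∈ u.image φ, (K : ℝ) * g k := Finset.sum_le_sum h3
      _ = (K : ℝ) * ∑ k ∈ u.image φ, g k := by rw [Finset.mul_sum]
      _ ≤ (K : ℝ) * ∑' k, g k := by
          exact mul_le_mul_of_nonneg_left
            (Summable.sum_le_tsum _ (fun k _ => hg0 k) hg) (Nat.cast_nonneg K)
  have hs : Summable h := summable_of_sum_le h0 key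
  exact ⟨hs, Summable.tsum_le_of_sum_le hs key⟩

private lemma fiber_card {n : ℕ} (Γ : Set (Fin n → ℝ)) (NΓ : ℕ)
    (hNΓfin : ∀ k : Fin n → ℤ,
      (Γ ∩ Set.Icc (fun i => (k i : ℝ)) (fun i => (k i : ℝ) + 1)).Finite)
    (hNΓ : ∀ k : Fin n → ℤ,
      (Γ ∩ Set.Icc (fun i => (k i : ℝ)) (fun i => (k i : ℝ) + 1)).ncard ≤ NΓ)
    (x : Fin n → ℝ) (k : Fin n → ℤ) (v : Finset Γ)
    (hv : ∀ γ ∈ v, (fun i => ⌊x i - (γ : Fin n → ℝ) i⌋) = k) :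
    v.card ≤ 2 ^ n * NΓ := by
  classical
  set m : Fin n → ℤ := fun i => ⌊x i - (k i : ℝ) - 1⌋ with hm
  set box : Finset (Fin n → ℤ) := Finset.Icc m (fun i => m i + 1) with hbox
  set big : Finset (Fin n → ℝ) := box.biUnion (fun e => (hNΓfin e).toFinset) with hbig
  have hsub : v.image (Subtype.val) ⊆ big := by
    intro y hy
    rcases Finset.mem_image.1 hy with ⟨γ, hγv, rfl⟩
    have hk := fun i => congrFun (hv γ hγv) i
    set e : Fin n → ℤ := fun i => ⌊(γ : Fin n → ℝ) i⌋ with he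
    have hbounds : ∀ i, m i ≤ e i ∧ e i ≤ m i + 1 := by
      intro i
      have hki : ⌊x i - (γ : Fin n → ℝ) i⌋ = k i := hk i
      have hlow : (k i : ℝ) ≤ x i - (γ : Fin n → ℝ) i := by
        have := Int.floor_le (x i - (γ : Fin n → ℝ) i); rwa [hki] at this
      have hhigh : x i - (γ : Fin n → ℝ) i < (k i : ℝ) + 1 := by
        have := Int.lt_floor_add_one (x i - (γ : Fin n → ℝ) i); rwa [hki] at this
      constructor
      · exact Int.floor_le_floor (by linarith)
      · have : (γ : Fin n → ℝ) i ≤ (x i - (k i : ℝ) - 1) + 1 := by linarith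
        have h2 : e i ≤ ⌊(x i - (k i : ℝ) - 1) + 1⌋ := Int.floor_le_floor this
        rwa [Int.floor_add_one] at h2
    refine Finset.mem_biUnion.2 ⟨e, ?_, ?_⟩
    · refine Finset.mem_Icc.2 ⟨fun i => (hbounds i).1, fun i => (hbounds i).2⟩
    · rw [Set.Finite.mem_toFinset]
      refine ⟨γ.2, ?_, ?_⟩
      · intro i; exact Int.floor_le _
      · intro i; exact (Int.lt_floor_add_one _).le
  have hcard1 : v.card = (v.image Subtype.val).card :=
    (Finset.card_image_of_injective v Subtype.val_injective).symm
  have hcard2 : big.card ≤ ∑ e ∈ box, ((hNΓfin e).toFinset).card := Finset.card_biUnion_le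
  have hcard3 : ∀ e : Fin n → ℤ, ((hNΓfin e).toFinset).card ≤ NΓ := by
    intro e
    have := hNΓ e
    rwa [Set.ncard_eq_toFinset_card _ (hNΓfin e)] at this
  have hboxcard : box.card = 2 ^ n := by
    rw [hbox, Pi.card_Icc]
    have : ∀ i : Fin n, (Finset.Icc (m i) (m i + 1)).card = 2 := by
      intro i; rw [Int.card_Icc]; omega
    simp [this]
  calc v.card = (v.image Subtype.val).card := hcard1
    _ ≤ big.card := Finset.card_le_card hsub
    _ ≤ ∑ e ∈ box, ((hNΓfin e).toFinset).card := hcard2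
    _ ≤ ∑ _e ∈ box, NΓ := Finset.sum_le_sum (fun e _ => hcard3 e)
    _ = box.card * NΓ := by rw [Finset.sum_const, smul_eq_mul]
    _ = 2 ^ n * NΓ := by rw [hboxcard]

/-- Under the localized frame setup, the Ω-assumptions and the decay assumption on
`Θ`, for every `ε > 0` there is a compact set `M` (independent of `f`) such that every
`f = Σ_γ c_γ F_γ ∈ V` admits the truncation `f̃ = Σ_{γ∈Γ∩M} c_γ F_γ` with
`|f(x) − f̃(x)| ≤ (ε/μ(Ω))‖f‖_{L^p}` on `Ω`, and hence `‖f − f̃‖_{L^p(Ω)} ≤ ε‖f‖_{L^p}`. -/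
theorem statement4
    (n : ℕ) (p : ℝ) (hp : 1 ≤ p)
    (Γ : Set (Fin n → ℝ)) (hΓc : Γ.Countable)
    (β : ℝ) (hβ : 0 < β)
    (hsep : ∀ γ ∈ Γ, ∀ γ' ∈ Γ, γ ≠ γ' → β ≤ ‖γ - γ'‖)
    (NΓ : ℕ)
    (hNΓfin : ∀ k : Fin n → ℤ,
      (Γ ∩ Set.Icc (fun i => (k i : ℝ)) (fun i => (k i : ℝ) + 1)).Finite)
    (hNΓ : ∀ k : Fin n → ℤ,
      (Γ ∩ Set.Icc (fun i => (k i : ℝ)) (fun i => (k i : ℝ) + 1)).ncard ≤ NΓ)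
    -- `Θ ∈ W(L¹)`
    (Θ : (Fin n → ℝ) → ℝ) (T : ℝ) (hΘbdd : ∀ x, |Θ x| ≤ T)
    (hΘsum : Summable (fun k : Fin n → ℤ =>
      sSup ((fun x => |Θ (x + fun i => (k i : ℝ))|) '' Set.Icc (0 : Fin n → ℝ) 1)))
    -- decay assumption on Θ
    (C α : ℝ) (hC : 0 < C)
    (hα1 : 1 < p → p / (p - 1) ≤ α) (hα2 : p = 1 → 1 ≤ α)
    (hdecay : ∀ N : ℝ, 1 ≤ N →
      ∑' k : {k : Fin n → ℤ // ¬ ∀ i, |(k i : ℝ)| ≤ N / 2},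
          sSup ((fun x => |Θ (x - fun i => ((k : Fin n → ℤ) i : ℝ))|) ''
            Set.Icc (0 : Fin n → ℝ) 1)
        < C / N ^ ((n : ℝ) * α))
    -- the localized frame
    (F : Γ → (Fin n → ℝ) → ℝ)
    (hFcont : ∀ γ, Continuous (F γ))
    (hFloc : ∀ γ x, |F γ x| ≤ Θ (x - (γ : Fin n → ℝ)))
    (A B : ℝ) (hA : 0 < A) (hB : 0 < B)
    (hframe : ∀ c : Γ → ℝ, Summable (fun γ => |c γ| ^ p) →
      A * ∫ y, |∑' γ : Γ, c γ * F γ y| ^ p ≤ ∑' γ : Γ, |c γ| ^ p ∧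
      ∑' γ : Γ, |c γ| ^ p ≤ B * ∫ y, |∑' γ : Γ, c γ * F γ y| ^ p)
    -- Ω-assumptions
    (Ω : Set (Fin n → ℝ)) (hΩ : IsCompact Ω) (hΩvol : 1 ≤ (volume Ω).toReal)
    (d : ℕ)
    (hbd : ∃ s : Finset (Fin n → ℤ), s.card = d ∧ frontier Ω ⊆
      ⋃ k ∈ s, Set.Icc (fun i => (k i : ℝ)) (fun i => (k i : ℝ) + 1))
    (CΓ : ℝ) (hCΓ : 0 < CΓ) (hΓΩfin : (Γ ∩ Ω).Finite)
    (hΓΩ : ((Γ ∩ Ω).ncard : ℝ) ≤ CΓ * (volume Ω).toReal)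
    -- conclusion
    (ε : ℝ) (hε : 0 < ε) :
    ∃ M : Set (Fin n → ℝ), IsCompact M ∧
      ∀ c : Γ → ℝ, Summable (fun γ => |c γ| ^ p) →
        (∀ x ∈ Ω,
          |(∑' γ : Γ, c γ * F γ x) -
              ∑' γ : Γ, (if (γ : Fin n → ℝ) ∈ M then c γ * F γ x else 0)| ≤
            (ε / (volume Ω).toReal) * (∫ y, |∑' γ : Γ, c γ * F γ y| ^ p) ^ (1 / p)) ∧
        (∫ x in Ω,
            |(∑' γ : Γ, c γ * F γ x) -
              ∑' γ : Γ, (if (γ : Fin n → ℝ) ∈ M then c γ * F γ x else 0)| ^ p) ^ (1 / p) ≤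
          ε * (∫ y, |∑' γ : Γ, c γ * F γ y| ^ p) ^ (1 / p) := by
  classical
  have hp0 : (0:ℝ) < p := lt_of_lt_of_le one_pos hp
  have hpne : p ≠ 0 := ne_of_gt hp0
  set μr : ℝ := (volume Ω).toReal with hμr
  have hμpos : (0:ℝ) < μr := lt_of_lt_of_le one_pos hΩvol
  -- the weight function on ℤ^n
  set g : (Fin n → ℤ) → ℝ := fun k =>
    sSup ((fun x => |Θ (x + fun i => (k i : ℝ))|) '' Set.Icc (0 : Fin n → ℝ) 1) with hgdef
  have hgsum : Summable g := hΘsum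
  have hbddA : ∀ k : Fin n → ℤ,
      BddAbove ((fun x => |Θ (x + fun i => (k i : ℝ))|) '' Set.Icc (0 : Fin n → ℝ) 1) := by
    intro k
    refine ⟨T, ?_⟩
    rintro _ ⟨z, _, rfl⟩
    exact hΘbdd _
  have hg0 : ∀ k, 0 ≤ g k := by
    intro k
    have h0mem : (0 : Fin n → ℝ) ∈ Set.Icc (0 : Fin n → ℝ) 1 := ⟨le_refl _, zero_le_one⟩
    exact le_trans (abs_nonneg _) (le_csSup (hbddA k) ⟨0, h0mem, rfl⟩)
  have hΘle : ∀ y : Fin n → ℝ, |Θ y| ≤ g (fun i => ⌊y i⌋) := by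
    intro y
    apply le_csSup (hbddA _)
    refine ⟨fun i => y i - ⌊y i⌋, ?_, ?_⟩
    · constructor
      · intro i; simp only [Pi.zero_apply]; exact sub_nonneg.2 (Int.floor_le _)
      · intro i; simp only [Pi.one_apply]
        have := Int.lt_floor_add_one (y i); linarith
    · show |Θ ((fun i => y i - ((⌊y i⌋ : ℤ) : ℝ)) + fun i => ((⌊y i⌋ : ℤ) : ℝ))| = |Θ y|
      have harg : ((fun i => y i - ((⌊y i⌋ : ℤ) : ℝ)) + fun i => ((⌊y i⌋ : ℤ) : ℝ)) = y := by
        funext i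
        simp only [Pi.add_apply]
        ring
      rw [harg]
  -- constants
  set Knat : ℕ := 2 ^ n * NΓ + 1 with hKnat
  have hKpos : (0:ℝ) < Knat := by positivity
  have hBp : (0:ℝ) < B ^ (1/p) := Real.rpow_pos_of_pos hB _
  set δ : ℝ := ε / (μr * B ^ (1/p) * Knat) with hδdef
  have hδpos : 0 < δ := by
    apply div_pos hε
    positivity
  -- choose the finite set s of cubes capturing the tail
  obtain ⟨s, hs⟩ : ∃ s : Finset (Fin n → ℤ), ∑' k : {k // k ∉ s}, g k < δ := by
    have := (tendsto_order.1 (tendsto_tsum_compl_atTop_zero g)).2 δ hδpos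
    exact this.exists
  -- the compact set M
  set Ks : Set (Fin n → ℝ) :=
    ⋃ k ∈ s, Set.Icc (fun i => (k i : ℝ)) (fun i => (k i : ℝ) + 1) with hKs
  have hKscomp : IsCompact Ks :=
    s.finite_toSet.isCompact_biUnion (fun k _ => isCompact_Icc)
  refine ⟨(fun q : (Fin n → ℝ) × (Fin n → ℝ) => q.1 - q.2) '' (Ω ×ˢ Ks),
    (hΩ.prod hKscomp).image (continuous_fst.sub continuous_snd), ?_⟩
  set M : Set (Fin n → ℝ) := (fun q : (Fin n → ℝ) × (Fin n → ℝ) => q.1 - q.2) '' (Ω ×ˢ Ks)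
    with hMdef
  have hMprop : ∀ x ∈ Ω, ∀ γ : Γ, (γ : Fin n → ℝ) ∉ M →
      (fun i => ⌊x i - (γ : Fin n → ℝ) i⌋) ∉ s := by
    intro x hx γ hγ hk
    apply hγ
    refine ⟨(x, x - (γ : Fin n → ℝ)), ⟨hx, ?_⟩, by simp⟩
    refine Set.mem_biUnion hk ⟨?_, ?_⟩
    · intro i
      simp only [Pi.sub_apply]
      exact Int.floor_le _
    · intro i
      simp only [Pi.sub_apply]
      exact (Int.lt_floor_add_one _).le
  -- now fix the coefficients
  intro c hc
  set I : ℝ := ∫ y, |∑' γ : Γ, c γ * F γ y| ^ p with hI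
  have hI0 : 0 ≤ I := integral_nonneg fun y => Real.rpow_nonneg (abs_nonneg _) p
  set Cc : ℝ := (∑' γ : Γ, |c γ| ^ p) ^ (1/p) with hCc
  have htsum0 : 0 ≤ ∑' γ : Γ, |c γ| ^ p :=
    tsum_nonneg fun γ => Real.rpow_nonneg (abs_nonneg _) p
  have hCc0 : 0 ≤ Cc := Real.rpow_nonneg htsum0 _
  have hcbd : ∀ γ : Γ, |c γ| ≤ Cc := by
    intro γ
    have h1 : |c γ| ^ p ≤ ∑' γ : Γ, |c γ| ^ p :=
      Summable.le_tsum hc γ (fun γ' _ => Real.rpow_nonneg (abs_nonneg _) p)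
    have h2 : |c γ| = (|c γ| ^ p) ^ (1/p) := by
      rw [← Real.rpow_mul (abs_nonneg _), mul_one_div_cancel hpne, Real.rpow_one]
    rw [h2]
    exact Real.rpow_le_rpow (Real.rpow_nonneg (abs_nonneg _) p) h1 (by positivity)
  have hCcI : Cc ≤ B ^ (1/p) * I ^ (1/p) := by
    have h2 := (hframe c hc).2
    calc Cc ≤ (B * I) ^ (1/p) := Real.rpow_le_rpow htsum0 h2 (by positivity)
      _ = B ^ (1/p) * I ^ (1/p) := Real.mul_rpow hB.le hI0
  -- key pointwise estimate
  have key : ∀ x ∈ Ω,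
      |(∑' γ : Γ, c γ * F γ x) -
        ∑' γ : Γ, (if (γ : Fin n → ℝ) ∈ M then c γ * F γ x else 0)| ≤
      (ε / μr) * I ^ (1/p) := by
    intro x hx
    set φ : Γ → (Fin n → ℤ) := fun γ => fun i => ⌊x i - (γ : Fin n → ℝ) i⌋ with hφ
    have hfib : ∀ (k : Fin n → ℤ) (v : Finset Γ), (∀ i ∈ v, φ i = k) → v.card ≤ Knat := by
      intro k v hv
      exact le_trans (fiber_card Γ NΓ hNΓfin hNΓ x k v hv) (Nat.le_succ _)
    have hFle : ∀ γ : Γ, |F γ x| ≤ g (φ γ) :=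
      fun γ => le_trans (hFloc γ x) (le_trans (le_abs_self _) (hΘle (x - (γ : Fin n → ℝ))))
    have hdom : ∀ γ : Γ, |c γ * F γ x| ≤ Cc * g (φ γ) := by
      intro γ
      rw [abs_mul]
      exact mul_le_mul (hcbd γ) (hFle γ) (abs_nonneg _) hCc0
    -- summability of the full series
    obtain ⟨hsumabs, -⟩ := fiber_tsum_le (fun k => Cc * g k)
      (fun k => mul_nonneg hCc0 (hg0 k)) (hgsum.mul_left Cc) φ Knat hfib
      (fun γ => |c γ * F γ x|) (fun γ => abs_nonneg _) hdom
    have hsumf : Summable (fun γ : Γ => c γ * F γ x) := hsumabs.of_abs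
    -- summability of the truncation
    have htruncabs : Summable (fun γ : Γ =>
        |if (γ : Fin n → ℝ) ∈ M then c γ * F γ x else 0|) := by
      apply Summable.of_nonneg_of_le (fun γ => abs_nonneg _) _ hsumabs
      intro γ
      split_ifs with h
      · exact le_refl _
      · simp only [abs_zero]; exact abs_nonneg _
    have hsumt : Summable (fun γ : Γ => if (γ : Fin n → ℝ) ∈ M then c γ * F γ x else 0) :=
      htruncabs.of_abs
    -- the tail series
    set h2 : Γ → ℝ := fun γ => if (γ : Fin n → ℝ) ∈ M then 0 else c γ * F γ x with hh2
    have heq : ∀ γ : Γ, c γ * F γ x -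
        (if (γ : Fin n → ℝ) ∈ M then c γ * F γ x else 0) = h2 γ := by
      intro γ
      simp only [hh2]
      split_ifs <;> ring
    have hdiff : (∑' γ : Γ, c γ * F γ x) -
        (∑' γ : Γ, (if (γ : Fin n → ℝ) ∈ M then c γ * F γ x else 0)) = ∑' γ : Γ, h2 γ := by
      rw [← Summable.tsum_sub hsumf hsumt]
      exact tsum_congr heq
    -- bound the tail series via fibers
    set g2 : (Fin n → ℤ) → ℝ := fun k => Cc * (if k ∈ s then 0 else g k) with hg2
    have hg20 : ∀ k, 0 ≤ g2 k := by
      intro k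
      apply mul_nonneg hCc0
      split_ifs
      · exact le_refl _
      · exact hg0 k
    have hg2sum : Summable g2 := by
      apply Summable.mul_left
      apply Summable.of_nonneg_of_le _ _ hgsum
      · intro k
        split_ifs with hk
        · exact le_refl 0
        · exact hg0 k
      · intro k
        split_ifs with hk
        · exact hg0 k
        · exact le_refl (g k)
    have hle2 : ∀ γ : Γ, |h2 γ| ≤ g2 (φ γ) := by
      intro γ
      simp only [hh2, hg2]
      by_cases hm : (γ : Fin n → ℝ) ∈ M
      · simp only [if_pos hm, abs_zero]
        exact hg20 (φ γ)
      · rw [if_neg hm, if_neg (hMprop x hx γ hm)]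
        rw [abs_mul]
        exact mul_le_mul (hcbd γ) (hFle γ) (abs_nonneg _) hCc0
    obtain ⟨h2sumabs, h2bound⟩ := fiber_tsum_le g2 hg20 hg2sum φ Knat hfib
      (fun γ => |h2 γ|) (fun γ => abs_nonneg _) hle2
    -- compute the tsum of g2
    have hg2tsum : ∑' k, g2 k = Cc * ∑' k : {k // k ∉ s}, g k := by
      rw [hg2, tsum_mul_left]
      congr 1
      have h3 : ∑' k : {k // k ∉ s}, g k = ∑' k, Set.indicator {k | k ∉ s} g k :=
        tsum_subtype {k | k ∉ s} g
      rw [h3]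
      apply tsum_congr
      intro k
      simp only [Set.indicator_apply, Set.mem_setOf_eq]
      by_cases hk : k ∈ s
      · rw [if_pos hk, if_neg (by simpa using hk)]
      · rw [if_neg hk, if_pos hk]
    have htail0 : 0 ≤ ∑' k : {k // k ∉ s}, g k := tsum_nonneg fun k => hg0 _
    calc |(∑' γ : Γ, c γ * F γ x) -
        ∑' γ : Γ, (if (γ : Fin n → ℝ) ∈ M then c γ * F γ x else 0)|
        = |∑' γ : Γ, h2 γ| := by rw [hdiff]
      _ ≤ ∑' γ : Γ, |h2 γ| := by
          have := norm_tsum_le_tsum_norm (f := fun γ : Γ => h2 γ) (by simpa using h2sumabs)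
          simpa using this
      _ ≤ Knat * ∑' k, g2 k := h2bound
      _ = Knat * (Cc * ∑' k : {k // k ∉ s}, g k) := by rw [hg2tsum]
      _ ≤ Knat * ((B ^ (1/p) * I ^ (1/p)) * δ) := by
          apply mul_le_mul_of_nonneg_left _ hKpos.le
          apply mul_le_mul hCcI hs.le htail0
          positivity
      _ = (ε / μr) * I ^ (1/p) := by
          rw [hδdef]
          field_simp
  refine ⟨key, ?_⟩
  set D : ℝ := (ε / μr) * I ^ (1/p) with hD
  have hD0 : 0 ≤ D := mul_nonneg (div_nonneg hε.le hμpos.le) (Real.rpow_nonneg hI0 _)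
  have hΩfin : volume Ω < ⊤ := hΩ.measure_lt_top
  have hΩmeas : MeasurableSet Ω := hΩ.isClosed.measurableSet
  have hbound2 : ∀ x ∈ Ω,
      ‖|(∑' γ : Γ, c γ * F γ x) -
          ∑' γ : Γ, (if (γ : Fin n → ℝ) ∈ M then c γ * F γ x else 0)| ^ p‖ ≤ D ^ p := by
    intro x hx
    rw [Real.norm_eq_abs, abs_of_nonneg (Real.rpow_nonneg (abs_nonneg _) p)]
    exact Real.rpow_le_rpow (abs_nonneg _) (key x hx) hp0.le
  have hint : (∫ x in Ω, |(∑' γ : Γ, c γ * F γ x) -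
      ∑' γ : Γ, (if (γ : Fin n → ℝ) ∈ M then c γ * F γ x else 0)| ^ p) ≤ D ^ p * μr := by
    calc (∫ x in Ω, |(∑' γ : Γ, c γ * F γ x) -
        ∑' γ : Γ, (if (γ : Fin n → ℝ) ∈ M then c γ * F γ x else 0)| ^ p)
        ≤ |∫ x in Ω, |(∑' γ : Γ, c γ * F γ x) -
          ∑' γ : Γ, (if (γ : Fin n → ℝ) ∈ M then c γ * F γ x else 0)| ^ p| := le_abs_self _
      _ = ‖∫ x in Ω, |(∑' γ : Γ, c γ * F γ x) -
          ∑' γ : Γ, (if (γ : Fin n → ℝ) ∈ M then c γ * F γ x else 0)| ^ p‖ :=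
          (Real.norm_eq_abs _).symm
      _ ≤ D ^ p * μr := norm_setIntegral_le_of_norm_le_const hΩfin hbound2
  have hint0 : (0:ℝ) ≤ ∫ x in Ω, |(∑' γ : Γ, c γ * F γ x) -
      ∑' γ : Γ, (if (γ : Fin n → ℝ) ∈ M then c γ * F γ x else 0)| ^ p :=
    integral_nonneg fun x => Real.rpow_nonneg (abs_nonneg _) p
  calc (∫ x in Ω, |(∑' γ : Γ, c γ * F γ x) -
      ∑' γ : Γ, (if (γ : Fin n → ℝ) ∈ M then c γ * F γ x else 0)| ^ p) ^ (1/p)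
      ≤ (D ^ p * μr) ^ (1/p) := Real.rpow_le_rpow hint0 hint (by positivity)
    _ = D * μr ^ (1/p) := by
        rw [Real.mul_rpow (Real.rpow_nonneg hD0 p) ENNReal.toReal_nonneg,
          ← Real.rpow_mul hD0, mul_one_div_cancel hpne, Real.rpow_one]
    _ ≤ D * μr := by
        apply mul_le_mul_of_nonneg_left _ hD0
        calc μr ^ (1/p) ≤ μr ^ (1:ℝ) :=
              Real.rpow_le_rpow_of_exponent_le hΩvol ((div_le_one hp0).2 hp)
          _ = μr := Real.rpow_one μr
    _ = ε * I ^ (1/p) := by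
        rw [hD]
        field_simp
end

section
/- Under the localized frame setup, the Ω-assumptions, and the decay assumption on Θ, the compact set M of the approximation lemma can be chosen so that additionally #(Γ ∩ M) ≤ C′ μ(Ω), where C′ > 0 depends only on ε, p, α, the decay constant C, the frame bound B, the boundary covering number d, N(Γ), and C(Γ) — but not on μ(Ω). In particular the dimension d_M of V_M satisfies d_M ≤ C′ μ(Ω). -/
open MeasureTheory Set
open scoped Classical

open scoped Pointwise

set_option maxHeartbeats 1000000

/- ### Auxiliary lemmas -/

lemma preconn_frontier {X : Type*} [TopologicalSpace X] {s t : Set X} (hs : IsPreconnected s)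
    (h1 : (s ∩ t).Nonempty) (h2 : (s \ t).Nonempty) : (s ∩ frontier t).Nonempty := by
  by_contra h
  rw [Set.not_nonempty_iff_eq_empty] at h
  have hfr : ∀ x ∈ s, x ∉ frontier t := by
    intro x hx hfx
    exact absurd (Set.mem_inter hx hfx) (by simp [h])
  obtain ⟨a, has, hat⟩ := h1
  obtain ⟨b, hbs, hbt⟩ := h2
  have ha' : a ∈ interior t := by
    by_contra hia
    exact hfr a has ⟨subset_closure hat, hia⟩
  have hb' : b ∈ (closure t)ᶜ := by
    intro hcb
    exact hfr b hbs ⟨hcb, fun hib => hbt (interior_subset hib)⟩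
  have := hs (interior t) (closure t)ᶜ isOpen_interior (isClosed_closure.isOpen_compl)
    (fun x hx => by
      by_cases hct : x ∈ closure t
      · left
        by_contra hix
        exact hfr x hx ⟨hct, hix⟩
      · right; exact hct)
    ⟨a, has, ha'⟩ ⟨b, hbs, hb'⟩
  obtain ⟨z, -, hzi, hzc⟩ := this
  exact hzc (subset_closure (interior_subset hzi))

lemma near_frontier {n : ℕ} (Ω : Set (Fin n → ℝ)) (R : ℝ) (x : Fin n → ℝ)
    (hx : x ∈ Ω + Metric.closedBall (0 : Fin n → ℝ) R) (hxΩ : x ∉ Ω) :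
    ∃ z ∈ frontier Ω, ∀ i, |x i - z i| ≤ R := by
  rw [Set.mem_add] at hx
  obtain ⟨a, ha, b, hb, rfl⟩ := hx
  have hseg : (segment ℝ a (a + b) ∩ frontier Ω).Nonempty := by
    refine preconn_frontier (convex_segment a (a + b)).isPreconnected
      ⟨a, left_mem_segment ℝ a (a + b), ha⟩ ⟨a + b, right_mem_segment ℝ a (a + b), hxΩ⟩
  obtain ⟨z, hzseg, hzfr⟩ := hseg
  refine ⟨z, hzfr, fun i => ?_⟩
  obtain ⟨u, v, hu, hv, huv, rfl⟩ := hzseg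
  have hz : a + b - (u • a + v • (a + b)) = (1 - v) • b - u • (0 : Fin n → ℝ) := by
    rw [smul_zero, sub_zero]
    funext j
    simp only [Pi.add_apply, Pi.sub_apply, Pi.smul_apply, smul_eq_mul]
    have : u = 1 - v := by linarith
    rw [this]; ring
  have hbR : ‖b‖ ≤ R := by rwa [Metric.mem_closedBall, dist_zero_right] at hb
  calc |(a + b) i - (u • a + v • (a + b)) i| = |(1 - v) * b i| := by
        rw [show (a + b) i - (u • a + v • (a + b)) i = ((1-v) • b - u • (0 : Fin n → ℝ)) i from by
          rw [← hz]; rfl]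
        simp
    _ = |1 - v| * |b i| := abs_mul _ _
    _ ≤ 1 * |b i| := by
        refine mul_le_mul_of_nonneg_right ?_ (abs_nonneg _)
        rw [abs_le]; constructor <;> linarith
    _ = |b i| := one_mul _
    _ ≤ ‖b‖ := by rw [← Real.norm_eq_abs]; exact norm_le_pi_norm b i
    _ ≤ R := hbR

lemma floor_cube {n : ℕ} (y : Fin n → ℝ) :
    y ∈ Set.Icc (fun i => ((⌊y i⌋ : ℤ) : ℝ)) (fun i => ((⌊y i⌋ : ℤ) : ℝ) + 1) :=
  ⟨fun i => Int.floor_le (y i), fun i => (Int.lt_floor_add_one (y i)).le⟩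

lemma countCover {n : ℕ} (Γ : Set (Fin n → ℝ)) (NΓ : ℕ)
    (hNΓfin : ∀ k : Fin n → ℤ,
      (Γ ∩ Set.Icc (fun i => (k i : ℝ)) (fun i => (k i : ℝ) + 1)).Finite)
    (hNΓ : ∀ k : Fin n → ℤ,
      (Γ ∩ Set.Icc (fun i => (k i : ℝ)) (fun i => (k i : ℝ) + 1)).ncard ≤ NΓ)
    (S : Set (Fin n → ℝ)) (t : Finset (Fin n → ℤ))
    (hS : ∀ y ∈ S, (fun i => ⌊y i⌋) ∈ t) :
    (Γ ∩ S).Finite ∧ (Γ ∩ S).ncard ≤ t.card * NΓ := by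
  classical
  set U : Finset (Fin n → ℝ) := t.biUnion (fun m => (hNΓfin m).toFinset) with hU
  have hsub : Γ ∩ S ⊆ (U : Set (Fin n → ℝ)) := by
    intro y ⟨hyΓ, hyS⟩
    simp only [hU, Finset.coe_biUnion, Set.mem_iUnion, Finset.mem_coe]
    exact ⟨fun i => ⌊y i⌋, hS y hyS, by
      rw [Set.Finite.mem_toFinset]
      exact ⟨hyΓ, floor_cube y⟩⟩
  have hfin : (Γ ∩ S).Finite := Set.Finite.subset U.finite_toSet hsub
  refine ⟨hfin, ?_⟩
  calc (Γ ∩ S).ncard ≤ (U : Set (Fin n → ℝ)).ncard :=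
        Set.ncard_le_ncard hsub U.finite_toSet
    _ = U.card := Set.ncard_coe_finset U
    _ ≤ ∑ m ∈ t, ((hNΓfin m).toFinset).card := Finset.card_biUnion_le
    _ ≤ ∑ _m ∈ t, NΓ := by
        refine Finset.sum_le_sum (fun m _ => ?_)
        rw [← Set.ncard_eq_toFinset_card _ (hNΓfin m)]
        exact hNΓ m
    _ = t.card * NΓ := by rw [Finset.sum_const, smul_eq_mul]

lemma fiber_floor_mem {n : ℕ} (x : Fin n → ℝ) (k : Fin n → ℤ) (y : Fin n → ℝ)
    (hy : (fun i => -⌊x i - y i⌋) = k) :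
    (fun i => ⌊y i⌋) ∈ Fintype.piFinset
      (fun i => ({⌊x i + (k i : ℝ)⌋ - 1, ⌊x i + (k i : ℝ)⌋} : Finset ℤ)) := by
  rw [Fintype.mem_piFinset]
  intro i
  have hk : ⌊x i - y i⌋ = -k i := by
    have := congrFun hy i; omega
  have h1 : ((-k i : ℤ) : ℝ) ≤ x i - y i := hk ▸ Int.floor_le _
  have h2 : x i - y i < (-k i : ℤ) + 1 := hk ▸ Int.lt_floor_add_one _
  have hyle : y i ≤ x i + (k i : ℝ) := by push_cast at h1 ⊢; linarith
  have hygt : x i + (k i : ℝ) - 1 < y i := by push_cast at h2 ⊢; linarith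
  have hb1 : ⌊y i⌋ ≤ ⌊x i + (k i : ℝ)⌋ := Int.floor_le_floor hyle
  have hb2 : ⌊x i + (k i : ℝ)⌋ - 1 ≤ ⌊y i⌋ := by
    rw [Int.le_floor]
    push_cast
    have : (⌊x i + (k i : ℝ)⌋ : ℝ) ≤ x i + (k i : ℝ) := Int.floor_le _
    linarith
  simp only [Finset.mem_insert, Finset.mem_singleton]
  omega

lemma piFinset_pair_card {n : ℕ} (b : Fin n → ℤ) :
    (Fintype.piFinset (fun i => ({b i - 1, b i} : Finset ℤ))).card ≤ 2 ^ n := by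
  rw [Fintype.card_piFinset]
  calc ∏ i, ({b i - 1, b i} : Finset ℤ).card ≤ ∏ _i : Fin n, 2 :=
        Finset.prod_le_prod (fun _ _ => Nat.zero_le _)
          (fun i _ => Finset.card_insert_le _ _)
    _ = 2 ^ n := by simp

lemma sum_phi_le {n : ℕ} (Γ : Set (Fin n → ℝ)) (NΓ : ℕ)
    (hNΓfin : ∀ k : Fin n → ℤ,
      (Γ ∩ Set.Icc (fun i => (k i : ℝ)) (fun i => (k i : ℝ) + 1)).Finite)
    (hNΓ : ∀ k : Fin n → ℤ,
      (Γ ∩ Set.Icc (fun i => (k i : ℝ)) (fun i => (k i : ℝ) + 1)).ncard ≤ NΓ)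
    (φ : (Fin n → ℤ) → ℝ) (hφ0 : ∀ k, 0 ≤ φ k)
    (x : Fin n → ℝ) (u : Finset ↥Γ) :
    ∑ γ ∈ u, φ (fun i => -⌊x i - (γ : Fin n → ℝ) i⌋) ≤
      (2 ^ n * NΓ : ℕ) *
        ∑ k ∈ u.image (fun γ : ↥Γ => (fun i => -⌊x i - (γ : Fin n → ℝ) i⌋ : Fin n → ℤ)), φ k := by
  classical
  set κ : ↥Γ → (Fin n → ℤ) := fun γ => (fun i => -⌊x i - (γ : Fin n → ℝ) i⌋) with hκ
  rw [Finset.sum_comp φ κ]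
  rw [Finset.mul_sum]
  refine Finset.sum_le_sum (fun k hk => ?_)
  rw [nsmul_eq_mul]
  refine mul_le_mul_of_nonneg_right ?_ (hφ0 k)
  norm_cast
  set Sfib : Set (Fin n → ℝ) := {y | (fun i => -⌊x i - y i⌋) = k} with hSfib
  have hcc := countCover Γ NΓ hNΓfin hNΓ Sfib
    (Fintype.piFinset (fun i => ({⌊x i + (k i : ℝ)⌋ - 1, ⌊x i + (k i : ℝ)⌋} : Finset ℤ)))
    (fun y hy => fiber_floor_mem x k y hy)
  have hcard : ((u.filter (fun γ => κ γ = k)).card : ℕ) =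
      (Subtype.val '' ((u.filter (fun γ => κ γ = k)) : Set ↥Γ)).ncard := by
    rw [Set.ncard_image_of_injective _ Subtype.val_injective, Set.ncard_coe_finset]
  rw [hcard]
  have hsub : Subtype.val '' ((u.filter (fun γ => κ γ = k)) : Set ↥Γ) ⊆ Γ ∩ Sfib := by
    rintro y ⟨γ, hγ, rfl⟩
    refine ⟨γ.2, ?_⟩
    simp only [Finset.coe_filter, Set.mem_setOf_eq] at hγ
    exact hγ.2
  calc (Subtype.val '' ((u.filter (fun γ => κ γ = k)) : Set ↥Γ)).ncard
      ≤ (Γ ∩ Sfib).ncard := Set.ncard_le_ncard hsub hcc.1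
    _ ≤ (Fintype.piFinset
          (fun i => ({⌊x i + (k i : ℝ)⌋ - 1, ⌊x i + (k i : ℝ)⌋} : Finset ℤ))).card * NΓ := hcc.2
    _ ≤ 2 ^ n * NΓ := Nat.mul_le_mul_right _ (piFinset_pair_card _)

section Phi
variable {n : ℕ} (Θ : (Fin n → ℝ) → ℝ) (T : ℝ)

noncomputable def Phi (k : Fin n → ℤ) : ℝ :=
  sSup ((fun x => |Θ (x - fun i => (k i : ℝ))|) '' Set.Icc (0 : Fin n → ℝ) 1)

lemma Phi_bddAbove (hΘbdd : ∀ x, |Θ x| ≤ T) (k : Fin n → ℤ) :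
    BddAbove ((fun x => |Θ (x - fun i => (k i : ℝ))|) '' Set.Icc (0 : Fin n → ℝ) 1) :=
  ⟨T, by rintro z ⟨u, -, rfl⟩; exact hΘbdd _⟩

lemma le_Phi (hΘbdd : ∀ x, |Θ x| ≤ T) (k : Fin n → ℤ) (u : Fin n → ℝ)
    (hu : u ∈ Set.Icc (0 : Fin n → ℝ) 1) :
    |Θ (u - fun i => (k i : ℝ))| ≤ Phi Θ k :=
  le_csSup (Phi_bddAbove Θ T hΘbdd k) ⟨u, hu, rfl⟩

lemma Phi_nonneg (hΘbdd : ∀ x, |Θ x| ≤ T) (k : Fin n → ℤ) : 0 ≤ Phi Θ k :=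
  le_trans (abs_nonneg _) (le_Phi Θ T hΘbdd k 0 ⟨le_refl _, fun i => zero_le_one⟩)

lemma theta_le_Phi (hΘbdd : ∀ x, |Θ x| ≤ T) (x γ : Fin n → ℝ) :
    Θ (x - γ) ≤ Phi Θ (fun i => -⌊x i - γ i⌋) := by
  set u : Fin n → ℝ := fun i => Int.fract (x i - γ i) with hu
  have hmem : u ∈ Set.Icc (0 : Fin n → ℝ) 1 :=
    ⟨fun i => Int.fract_nonneg _, fun i => (Int.fract_lt_one _).le⟩
  have harg : (u - fun i => (((fun i => -⌊x i - γ i⌋) i : ℤ) : ℝ)) = x - γ := by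
    funext i
    simp only [hu, Pi.sub_apply, Int.fract, Int.cast_neg]
    ring
  calc Θ (x - γ) ≤ |Θ (x - γ)| := le_abs_self _
    _ = |Θ (u - fun i => (((fun i => -⌊x i - γ i⌋) i : ℤ) : ℝ))| := by rw [harg]
    _ ≤ Phi Θ _ := le_Phi Θ T hΘbdd _ u hmem

lemma Phi_summable
    (hΘsum : Summable (fun k : Fin n → ℤ =>
      sSup ((fun x => |Θ (x + fun i => (k i : ℝ))|) '' Set.Icc (0 : Fin n → ℝ) 1))) :
    Summable (Phi Θ) := by
  have hkey : ∀ k : Fin n → ℤ, Phi Θ k =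
      sSup ((fun x => |Θ (x + fun i => ((-k) i : ℝ))|) '' Set.Icc (0 : Fin n → ℝ) 1) := by
    intro k
    have harg : ∀ u : Fin n → ℝ,
        (u + fun i => ((-k) i : ℝ)) = (u - fun i => (k i : ℝ)) := by
      intro u
      funext i
      simp only [Pi.add_apply, Pi.sub_apply, Int.cast_neg, Pi.neg_apply]
      ring
    unfold Phi
    congr 1
    ext z
    constructor
    · rintro ⟨u, hu, rfl⟩
      exact ⟨u, hu, by simp only [harg u]⟩
    · rintro ⟨u, hu, rfl⟩
      exact ⟨u, hu, by simp only [harg u]⟩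
  have : Phi Θ = (fun k : Fin n → ℤ =>
      sSup ((fun x => |Θ (x + fun i => (k i : ℝ))|) '' Set.Icc (0 : Fin n → ℝ) 1)) ∘
      (Equiv.neg (Fin n → ℤ)) := by
    funext k
    exact hkey k
  rw [this]
  exact ((Equiv.neg (Fin n → ℤ)).summable_iff).mpr hΘsum

end Phi

lemma finrank_span_le {n : ℕ} (Γ : Set (Fin n → ℝ)) (F : ↥Γ → (Fin n → ℝ) → ℝ)
    (M : Set (Fin n → ℝ)) (hfin : (Γ ∩ M).Finite) :
    Module.finrank ℝ
      (Submodule.span ℝ {g : (Fin n → ℝ) → ℝ | ∃ γ : ↥Γ, (γ : Fin n → ℝ) ∈ M ∧ g = F γ}) ≤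
      (Γ ∩ M).ncard := by
  classical
  set P : Set ↥Γ := {γ : ↥Γ | (γ : Fin n → ℝ) ∈ M} with hP
  have hPpre : P = Subtype.val ⁻¹' (Γ ∩ M) := by
    ext γ; simp [hP, γ.2]
  have hPfin : P.Finite := by
    rw [hPpre]
    exact Set.Finite.preimage (Subtype.val_injective.injOn) hfin
  have hG : {g : (Fin n → ℝ) → ℝ | ∃ γ : ↥Γ, (γ : Fin n → ℝ) ∈ M ∧ g = F γ} = F '' P := by
    ext g
    constructor
    · rintro ⟨γ, hγ, rfl⟩; exact ⟨γ, hγ, rfl⟩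
    · rintro ⟨γ, hγ, rfl⟩; exact ⟨γ, hγ, rfl⟩
  have hGfin : ({g : (Fin n → ℝ) → ℝ | ∃ γ : ↥Γ, (γ : Fin n → ℝ) ∈ M ∧ g = F γ}).Finite := by
    rw [hG]; exact hPfin.image F
  have h1 : Module.finrank ℝ
      (Submodule.span ℝ {g : (Fin n → ℝ) → ℝ | ∃ γ : ↥Γ, (γ : Fin n → ℝ) ∈ M ∧ g = F γ}) ≤
      hGfin.toFinset.card := by
    have := finrank_span_finset_le_card (R := ℝ) hGfin.toFinset
    rw [Set.Finite.coe_toFinset] at this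
    exact this
  have h2 : hGfin.toFinset.card =
      ({g : (Fin n → ℝ) → ℝ | ∃ γ : ↥Γ, (γ : Fin n → ℝ) ∈ M ∧ g = F γ}).ncard :=
    (Set.ncard_eq_toFinset_card _ hGfin).symm
  have h3 : ({g : (Fin n → ℝ) → ℝ | ∃ γ : ↥Γ, (γ : Fin n → ℝ) ∈ M ∧ g = F γ}).ncard ≤
      P.ncard := by
    rw [hG]
    exact Set.ncard_image_le hPfin
  have h4 : P.ncard = (Γ ∩ M).ncard := by
    have : Subtype.val '' P = Γ ∩ M := by
      ext y
      constructor
      · rintro ⟨γ, hγ, rfl⟩; exact ⟨γ.2, hγ⟩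
      · rintro ⟨hy1, hy2⟩; exact ⟨⟨y, hy1⟩, hy2, rfl⟩
    rw [← this, Set.ncard_image_of_injective _ Subtype.val_injective]
  omega

/-- The compact set `M` of the approximation lemma can be chosen so that moreover
`#(Γ ∩ M) ≤ C′ μ(Ω)` with `C′` independent of `μ(Ω)` (it depends only on `ε, p, α, C, B, d,
N(Γ), C(Γ)` and the setup); in particular `d_M = dim V_M ≤ C′ μ(Ω)`. -/
theorem statement5
    (n : ℕ) (p : ℝ) (hp : 1 ≤ p)
    (Γ : Set (Fin n → ℝ)) (hΓc : Γ.Countable)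
    (β : ℝ) (hβ : 0 < β)
    (hsep : ∀ γ ∈ Γ, ∀ γ' ∈ Γ, γ ≠ γ' → β ≤ ‖γ - γ'‖)
    (NΓ : ℕ)
    (hNΓfin : ∀ k : Fin n → ℤ,
      (Γ ∩ Set.Icc (fun i => (k i : ℝ)) (fun i => (k i : ℝ) + 1)).Finite)
    (hNΓ : ∀ k : Fin n → ℤ,
      (Γ ∩ Set.Icc (fun i => (k i : ℝ)) (fun i => (k i : ℝ) + 1)).ncard ≤ NΓ)
    -- `Θ ∈ W(L¹)`
    (Θ : (Fin n → ℝ) → ℝ) (T : ℝ) (hΘbdd : ∀ x, |Θ x| ≤ T)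
    (hΘsum : Summable (fun k : Fin n → ℤ =>
      sSup ((fun x => |Θ (x + fun i => (k i : ℝ))|) '' Set.Icc (0 : Fin n → ℝ) 1)))
    -- decay assumption on Θ
    (C α : ℝ) (hC : 0 < C)
    (hα1 : 1 < p → p / (p - 1) ≤ α) (hα2 : p = 1 → 1 ≤ α)
    (hdecay : ∀ N : ℝ, 1 ≤ N →
      ∑' k : {k : Fin n → ℤ // ¬ ∀ i, |(k i : ℝ)| ≤ N / 2},
          sSup ((fun x => |Θ (x - fun i => ((k : Fin n → ℤ) i : ℝ))|) ''
            Set.Icc (0 : Fin n → ℝ) 1)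
        < C / N ^ ((n : ℝ) * α))
    -- the localized frame
    (F : Γ → (Fin n → ℝ) → ℝ)
    (hFcont : ∀ γ, Continuous (F γ))
    (hFloc : ∀ γ x, |F γ x| ≤ Θ (x - (γ : Fin n → ℝ)))
    (A B : ℝ) (hA : 0 < A) (hB : 0 < B)
    (hframe : ∀ c : Γ → ℝ, Summable (fun γ => |c γ| ^ p) →
      A * ∫ y, |∑' γ : Γ, c γ * F γ y| ^ p ≤ ∑' γ : Γ, |c γ| ^ p ∧
      ∑' γ : Γ, |c γ| ^ p ≤ B * ∫ y, |∑' γ : Γ, c γ * F γ y| ^ p)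
    -- data on which C′ may depend
    (ε : ℝ) (hε : 0 < ε) (d : ℕ) (CΓ : ℝ) (hCΓ : 0 < CΓ) :
    -- C′ does not depend on Ω (in particular not on μ(Ω))
    ∃ C' : ℝ, 0 < C' ∧
      ∀ Ω : Set (Fin n → ℝ), IsCompact Ω → 1 ≤ (volume Ω).toReal →
        (∃ s : Finset (Fin n → ℤ), s.card = d ∧ frontier Ω ⊆
          ⋃ k ∈ s, Set.Icc (fun i => (k i : ℝ)) (fun i => (k i : ℝ) + 1)) →
        (Γ ∩ Ω).Finite → ((Γ ∩ Ω).ncard : ℝ) ≤ CΓ * (volume Ω).toReal →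
        ∃ M : Set (Fin n → ℝ), IsCompact M ∧
          -- the approximation property of the lemma
          (∀ c : Γ → ℝ, Summable (fun γ => |c γ| ^ p) →
            ∀ x ∈ Ω,
              |(∑' γ : Γ, c γ * F γ x) -
                  ∑' γ : Γ, (if (γ : Fin n → ℝ) ∈ M then c γ * F γ x else 0)| ≤
                (ε / (volume Ω).toReal) * (∫ y, |∑' γ : Γ, c γ * F γ y| ^ p) ^ (1 / p)) ∧
          -- the cardinality bound
          (Γ ∩ M).Finite ∧
          (((Γ ∩ M).ncard : ℝ) ≤ C' * (volume Ω).toReal) ∧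
          -- in particular: the dimension of V_M is at most C′ μ(Ω)
          ((Module.finrank ℝ
              (Submodule.span ℝ
                {g : (Fin n → ℝ) → ℝ | ∃ γ : Γ, (γ : Fin n → ℝ) ∈ M ∧ g = F γ}) : ℝ) ≤
            C' * (volume Ω).toReal) := by
  classical
  have hp0 : (0 : ℝ) < p := lt_of_lt_of_le one_pos hp
  set φ : (Fin n → ℤ) → ℝ := Phi Θ with hφdef
  have hφ0 : ∀ k, 0 ≤ φ k := Phi_nonneg Θ T hΘbdd
  have hφsum : Summable φ := Phi_summable Θ hΘsum
  set Bp : ℝ := B ^ (1/p) with hBpdef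
  have hBp : 0 < Bp := Real.rpow_pos_of_pos hB _
  set Qr : ℝ := ((2 ^ n * NΓ : ℕ) : ℝ) with hQrdef
  have hQr0 : 0 ≤ Qr := Nat.cast_nonneg _
  set K : ℝ := max 1 (Qr * C * Bp / ε) with hKdef
  have hK1 : (1 : ℝ) ≤ K := le_max_left _ _
  have hK0 : (0 : ℝ) < K := lt_of_lt_of_le one_pos hK1
  have hα : (1 : ℝ) ≤ α := by
    rcases eq_or_lt_of_le hp with heq | hlt
    · exact hα2 heq.symm
    · have h := hα1 hlt
      have h2 : (1 : ℝ) ≤ p / (p - 1) := by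
        rw [le_div_iff₀ (by linarith)]
        linarith
      linarith
  have hα0 : (0 : ℝ) < α := lt_of_lt_of_le one_pos hα
  refine ⟨CΓ + (d : ℝ) * (NΓ : ℝ) * 8 ^ n * K + 1, by positivity, ?_⟩
  intro Ω hΩcpt hμ1 hfrcov hΓΩfin hΓΩcard
  obtain ⟨s, hscard, hscov⟩ := hfrcov
  set μ : ℝ := (volume Ω).toReal with hμdef
  have hμ0 : (0 : ℝ) < μ := lt_of_lt_of_le one_pos hμ1
  have hKμ : (1 : ℝ) ≤ K * μ := by nlinarith
  have hKμ0 : (0 : ℝ) < K * μ := by positivity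
  set nα : ℝ := (n : ℝ) * α with hnαdef
  have hnα0 : (0 : ℝ) ≤ nα := by positivity
  set N : ℝ := (K * μ) ^ (1 / nα) with hNdef
  have hN1 : (1 : ℝ) ≤ N := by
    have h := Real.rpow_le_rpow zero_le_one hKμ (one_div_nonneg.mpr hnα0)
    rw [Real.one_rpow] at h
    rw [hNdef]
    exact h
  have hNpos : (0 : ℝ) < N := lt_of_lt_of_le one_pos hN1
  have hNpow : n ≠ 0 → K * μ ≤ N ^ nα := by
    intro hn
    have hnαne : nα ≠ 0 := by
      have hnpos : (0 : ℝ) < (n : ℝ) := by exact_mod_cast Nat.pos_of_ne_zero hn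
      rw [hnαdef]; positivity
    have hNeq : N ^ nα = K * μ := by
      rw [hNdef, ← Real.rpow_mul hKμ0.le, one_div_mul_cancel hnαne, Real.rpow_one]
    rw [hNeq]
  have hNn : N ^ n ≤ K * μ := by
    rcases Nat.eq_zero_or_pos n with hn | hn
    · rw [hn, pow_zero]; exact hKμ
    · have hnne : n ≠ 0 := Nat.pos_iff_ne_zero.mp hn
      have hnαne : nα ≠ 0 := by
        have hnpos : (0 : ℝ) < (n : ℝ) := by exact_mod_cast hn
        rw [hnαdef]; positivity
      have h1 : N ^ n = (K * μ) ^ ((1 / nα) * (n : ℝ)) := by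
        rw [← Real.rpow_natCast N n, hNdef, ← Real.rpow_mul hKμ0.le]
      have h2 : (1 / nα) * (n : ℝ) = 1 / α := by
        have hnpos : (0 : ℝ) < (n : ℝ) := by exact_mod_cast hn
        rw [hnαdef]
        field_simp
      rw [h1, h2]
      calc (K * μ) ^ ((1 : ℝ) / α) ≤ (K * μ) ^ (1 : ℝ) :=
            Real.rpow_le_rpow_of_exponent_le hKμ ((div_le_one hα0).mpr hα)
        _ = K * μ := Real.rpow_one _
  set R : ℝ := 1 + N / 2 with hRdef
  have hR0 : (0 : ℝ) ≤ R := by rw [hRdef]; linarith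
  set M : Set (Fin n → ℝ) := Ω + Metric.closedBall (0 : Fin n → ℝ) R with hMdef
  have hMcpt : IsCompact M := hΩcpt.add (isCompact_closedBall _ _)
  -- if γ ∉ M and x ∈ Ω then the lattice index of γ relative to x is "bad"
  have hMout : ∀ x ∈ Ω, ∀ γ : ↥Γ, (γ : Fin n → ℝ) ∉ M →
      ¬ ∀ i, |((fun i => -⌊x i - (γ : Fin n → ℝ) i⌋ : Fin n → ℤ) i : ℝ)| ≤ N / 2 := by
    intro x hx γ hγM hall
    apply hγM
    rw [hMdef, Set.mem_add]
    refine ⟨x, hx, (γ : Fin n → ℝ) - x, ?_, by funext j; simp⟩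
    rw [Metric.mem_closedBall, dist_zero_right]
    rw [pi_norm_le_iff_of_nonneg hR0]
    intro i
    have hk := hall i
    simp only [Int.cast_neg, abs_neg] at hk
    have hfl : (⌊x i - (γ : Fin n → ℝ) i⌋ : ℝ) ≤ x i - (γ : Fin n → ℝ) i := Int.floor_le _
    have hfl2 : x i - (γ : Fin n → ℝ) i < (⌊x i - (γ : Fin n → ℝ) i⌋ : ℝ) + 1 :=
      Int.lt_floor_add_one _
    have habs : |x i - (γ : Fin n → ℝ) i| ≤ |(⌊x i - (γ : Fin n → ℝ) i⌋ : ℝ)| + 1 := by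
      have h5 : |x i - (γ : Fin n → ℝ) i - (⌊x i - (γ : Fin n → ℝ) i⌋ : ℝ)| ≤ 1 :=
        abs_le.mpr ⟨by linarith, by linarith⟩
      calc |x i - (γ : Fin n → ℝ) i|
          = |(⌊x i - (γ : Fin n → ℝ) i⌋ : ℝ) +
              (x i - (γ : Fin n → ℝ) i - (⌊x i - (γ : Fin n → ℝ) i⌋ : ℝ))| := by congr 1; ring
        _ ≤ |(⌊x i - (γ : Fin n → ℝ) i⌋ : ℝ)| +
              |x i - (γ : Fin n → ℝ) i - (⌊x i - (γ : Fin n → ℝ) i⌋ : ℝ)| := abs_add_le _ _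
        _ ≤ |(⌊x i - (γ : Fin n → ℝ) i⌋ : ℝ)| + 1 := by linarith
    have : ‖((γ : Fin n → ℝ) - x) i‖ = |x i - (γ : Fin n → ℝ) i| := by
      rw [Real.norm_eq_abs, Pi.sub_apply, abs_sub_comm]
    rw [this]
    calc |x i - (γ : Fin n → ℝ) i| ≤ |(⌊x i - (γ : Fin n → ℝ) i⌋ : ℝ)| + 1 := habs
      _ ≤ N / 2 + 1 := by linarith
      _ = R := by rw [hRdef]; ring
  refine ⟨M, hMcpt, ?_, ?_⟩
  · -- approximation property
    intro c hsum x hx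
    set S : ℝ := ∑' γ : ↥Γ, |c γ| ^ p with hSdef
    have hS0 : 0 ≤ S := tsum_nonneg (fun γ => Real.rpow_nonneg (abs_nonneg _) _)
    set I : ℝ := ∫ y, |∑' γ : ↥Γ, c γ * F γ y| ^ p with hIdef
    have hI0 : 0 ≤ I := integral_nonneg (fun y => Real.rpow_nonneg (abs_nonneg _) _)
    have hSBI : S ≤ B * I := (hframe c hsum).2
    set Cs : ℝ := S ^ (1/p) with hCsdef
    have hCs0 : 0 ≤ Cs := Real.rpow_nonneg hS0 _
    have hcle : ∀ γ : ↥Γ, |c γ| ≤ Cs := by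
      intro γ
      have h1 : |c γ| ^ p ≤ S :=
        Summable.le_tsum hsum γ (fun γ' _ => Real.rpow_nonneg (abs_nonneg _) _)
      have h2 : (|c γ| ^ p) ^ (1/p) ≤ Cs :=
        Real.rpow_le_rpow (Real.rpow_nonneg (abs_nonneg _) _) h1 (by positivity)
      rwa [← Real.rpow_mul (abs_nonneg _), mul_one_div_cancel (ne_of_gt hp0),
        Real.rpow_one] at h2
    have hCsBI : Cs ≤ Bp * I ^ (1/p) := by
      calc Cs ≤ (B * I) ^ (1/p) := Real.rpow_le_rpow hS0 hSBI (by positivity)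
        _ = Bp * I ^ (1/p) := Real.mul_rpow hB.le hI0
    -- lattice index
    set κx : ↥Γ → (Fin n → ℤ) := fun γ => (fun i => -⌊x i - (γ : Fin n → ℝ) i⌋) with hκxdef
    have hφκ_bound : ∀ u : Finset ↥Γ, ∑ γ ∈ u, φ (κx γ) ≤ Qr * ∑' k : Fin n → ℤ, φ k := by
      intro u
      refine le_trans (sum_phi_le Γ NΓ hNΓfin hNΓ φ hφ0 x u) ?_
      exact mul_le_mul_of_nonneg_left
        (Summable.sum_le_tsum _ (fun k _ => hφ0 k) hφsum) hQr0
    have hφκsum : Summable (fun γ : ↥Γ => φ (κx γ)) :=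
      summable_of_sum_le (fun γ => hφ0 _) hφκ_bound
    have habs : ∀ γ : ↥Γ, |c γ * F γ x| ≤ Cs * φ (κx γ) := by
      intro γ
      rw [abs_mul]
      refine mul_le_mul (hcle γ) ?_ (abs_nonneg _) hCs0
      exact le_trans (hFloc γ x) (theta_le_Phi Θ T hΘbdd x (γ : Fin n → ℝ))
    have habs_sum : Summable (fun γ : ↥Γ => |c γ * F γ x|) :=
      Summable.of_nonneg_of_le (fun _ => abs_nonneg _) habs (hφκsum.mul_left Cs)
    have hsum1 : Summable (fun γ : ↥Γ => c γ * F γ x) := habs_sum.of_abs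
    have hsum2 : Summable (fun γ : ↥Γ => if (γ : Fin n → ℝ) ∈ M then c γ * F γ x else 0) := by
      refine Summable.of_abs (Summable.of_nonneg_of_le (fun _ => abs_nonneg _)
        (fun γ => ?_) habs_sum)
      by_cases h : (γ : Fin n → ℝ) ∈ M <;> simp [h, abs_nonneg, mul_nonneg]
    have hsum3 : Summable (fun γ : ↥Γ => if (γ : Fin n → ℝ) ∈ M then 0 else c γ * F γ x) := by
      refine Summable.of_abs (Summable.of_nonneg_of_le (fun _ => abs_nonneg _)
        (fun γ => ?_) habs_sum)
      by_cases h : (γ : Fin n → ℝ) ∈ M <;> simp [h, abs_nonneg, mul_nonneg]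
    have hdiff : (∑' γ : ↥Γ, c γ * F γ x) -
        (∑' γ : ↥Γ, if (γ : Fin n → ℝ) ∈ M then c γ * F γ x else 0) =
        ∑' γ : ↥Γ, (if (γ : Fin n → ℝ) ∈ M then 0 else c γ * F γ x) := by
      rw [← Summable.tsum_sub hsum1 hsum2]
      congr 1
      funext γ
      by_cases h : (γ : Fin n → ℝ) ∈ M <;> simp [h]
    rw [hdiff]
    -- tail sum over bad indices
    set bad : Set (Fin n → ℤ) := {k | ¬ ∀ i, |(k i : ℝ)| ≤ N / 2} with hbaddef
    set Tail : ℝ := ∑' k : ↥bad, φ (k : Fin n → ℤ) with hTaildef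
    have hTail0 : 0 ≤ Tail := tsum_nonneg (fun k => hφ0 _)
    have hstep1 : |∑' γ : ↥Γ, (if (γ : Fin n → ℝ) ∈ M then 0 else c γ * F γ x)| ≤
        ∑' γ : ↥Γ, |if (γ : Fin n → ℝ) ∈ M then 0 else c γ * F γ x| := by
      have := norm_tsum_le_tsum_norm (f := fun γ : ↥Γ =>
        if (γ : Fin n → ℝ) ∈ M then 0 else c γ * F γ x) ?_
      · simpa [Real.norm_eq_abs] using this
      · refine Summable.of_nonneg_of_le (fun _ => norm_nonneg _) (fun γ => ?_) habs_sum
        rw [Real.norm_eq_abs]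
        by_cases h : (γ : Fin n → ℝ) ∈ M <;> simp [h, abs_nonneg, mul_nonneg]
    have hsumIteφ : Summable (fun γ : ↥Γ => if (γ : Fin n → ℝ) ∈ M then 0 else φ (κx γ)) := by
      refine Summable.of_nonneg_of_le (fun γ => ?_) (fun γ => ?_) hφκsum
      · by_cases h : (γ : Fin n → ℝ) ∈ M <;> simp [h, hφ0]
      · by_cases h : (γ : Fin n → ℝ) ∈ M <;> simp [h, hφ0]
    have hstep2 : ∑' γ : ↥Γ, |if (γ : Fin n → ℝ) ∈ M then 0 else c γ * F γ x| ≤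
        ∑' γ : ↥Γ, (if (γ : Fin n → ℝ) ∈ M then 0 else Cs * φ (κx γ)) := by
      refine Summable.tsum_le_tsum (fun γ => ?_) ?_ ?_
      · by_cases h : (γ : Fin n → ℝ) ∈ M
        · simp [h]
        · simp only [h, if_false]
          exact habs γ
      · refine Summable.of_nonneg_of_le (fun _ => abs_nonneg _) (fun γ => ?_) habs_sum
        by_cases h : (γ : Fin n → ℝ) ∈ M <;> simp [h, abs_nonneg, mul_nonneg]
      · refine Summable.of_nonneg_of_le (fun γ => ?_) (fun γ => ?_) (hφκsum.mul_left Cs)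
        · by_cases h : (γ : Fin n → ℝ) ∈ M
          · simp only [h, if_true]; exact le_refl _
          · simp only [h, if_false]; exact mul_nonneg hCs0 (hφ0 _)
        · by_cases h : (γ : Fin n → ℝ) ∈ M
          · simp only [h, if_true]; exact mul_nonneg hCs0 (hφ0 _)
          · simp only [h, if_false]; exact le_refl _
    have hstep3 : ∑' γ : ↥Γ, (if (γ : Fin n → ℝ) ∈ M then 0 else Cs * φ (κx γ)) =
        Cs * ∑' γ : ↥Γ, (if (γ : Fin n → ℝ) ∈ M then 0 else φ (κx γ)) := by
      rw [← tsum_mul_left]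
      congr 1
      funext γ
      by_cases h : (γ : Fin n → ℝ) ∈ M <;> simp [h]
    have hstep4 : ∑' γ : ↥Γ, (if (γ : Fin n → ℝ) ∈ M then 0 else φ (κx γ)) ≤ Qr * Tail := by
      refine Summable.tsum_le_of_sum_le hsumIteφ (fun u => ?_)
      have hflt : ∑ γ ∈ u, (if (γ : Fin n → ℝ) ∈ M then 0 else φ (κx γ)) =
          ∑ γ ∈ u.filter (fun γ : ↥Γ => (γ : Fin n → ℝ) ∉ M), φ (κx γ) := by
        rw [Finset.sum_filter]
        refine Finset.sum_congr rfl (fun γ _ => ?_)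
        by_cases h : (γ : Fin n → ℝ) ∈ M <;> simp [h]
      rw [hflt]
      refine le_trans (sum_phi_le Γ NΓ hNΓfin hNΓ φ hφ0 x _) ?_
      refine mul_le_mul_of_nonneg_left ?_ hQr0
      set u' := u.filter (fun γ : ↥Γ => (γ : Fin n → ℝ) ∉ M) with hu'
      have himg : ∀ k ∈ u'.image (fun γ : ↥Γ =>
          (fun i => -⌊x i - (γ : Fin n → ℝ) i⌋ : Fin n → ℤ)), k ∈ bad := by
        intro k hk
        obtain ⟨γ, hγ, rfl⟩ := Finset.mem_image.mp hk
        rw [hu', Finset.mem_filter] at hγ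
        exact hMout x hx γ hγ.2
      calc ∑ k ∈ u'.image (fun γ : ↥Γ =>
              (fun i => -⌊x i - (γ : Fin n → ℝ) i⌋ : Fin n → ℤ)), φ k
          = ∑ k ∈ u'.image (fun γ : ↥Γ =>
              (fun i => -⌊x i - (γ : Fin n → ℝ) i⌋ : Fin n → ℤ)), bad.indicator φ k :=
            Finset.sum_congr rfl (fun k hk => (Set.indicator_of_mem (himg k hk) φ).symm)
        _ ≤ ∑' k : Fin n → ℤ, bad.indicator φ k :=
            Summable.sum_le_tsum _ (fun k _ => Set.indicator_nonneg (fun k' _ => hφ0 k') k)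
              (hφsum.indicator bad)
        _ = Tail := (tsum_subtype bad φ).symm
    have hchain : |∑' γ : ↥Γ, (if (γ : Fin n → ℝ) ∈ M then 0 else c γ * F γ x)| ≤
        Cs * (Qr * Tail) := by
      refine le_trans hstep1 (le_trans hstep2 ?_)
      rw [hstep3]
      exact mul_le_mul_of_nonneg_left hstep4 hCs0
    refine le_trans hchain ?_
    -- final numeric estimate
    rcases Nat.eq_zero_or_pos n with hn0 | hnpos
    · -- n = 0 : the bad set is empty
      have hempty : IsEmpty ↥bad := by
        subst hn0
        refine ⟨fun k => ?_⟩
        exact k.2 (fun i => i.elim0)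
      have hT : Tail = 0 := by
        rw [hTaildef]
        exact tsum_empty
      rw [hT]
      have : Cs * (Qr * 0) = 0 := by ring
      rw [this]
      positivity
    · have hTailC : Tail ≤ C / N ^ nα := by
        have := hdecay N hN1
        exact le_of_lt this
      have hNα0 : (0 : ℝ) < N ^ nα := Real.rpow_pos_of_pos hNpos _
      have h8 : Bp * Qr * C / N ^ nα ≤ ε / μ := by
        rw [div_le_div_iff₀ hNα0 hμ0]
        have h9 : K * μ ≤ N ^ nα := hNpow (Nat.pos_iff_ne_zero.mp hnpos)
        have h10 : Qr * C * Bp / ε ≤ K := le_max_right _ _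
        have h11 : Qr * C * Bp ≤ ε * K := by
          rw [div_le_iff₀ hε] at h10
          linarith
        have h12 : ε * (K * μ) ≤ ε * N ^ nα := mul_le_mul_of_nonneg_left h9 hε.le
        have h13 : Qr * C * Bp * μ ≤ ε * K * μ := mul_le_mul_of_nonneg_right h11 hμ0.le
        calc Bp * Qr * C * μ = Qr * C * Bp * μ := by ring
          _ ≤ ε * K * μ := h13
          _ = ε * (K * μ) := by ring
          _ ≤ ε * N ^ nα := h12
      calc Cs * (Qr * Tail) ≤ (Bp * I ^ (1/p)) * (Qr * (C / N ^ nα)) := by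
            refine mul_le_mul hCsBI ?_ (by positivity) (by positivity)
            exact mul_le_mul_of_nonneg_left hTailC hQr0
        _ = (Bp * Qr * C / N ^ nα) * I ^ (1/p) := by ring
        _ ≤ (ε / μ) * I ^ (1/p) := by
            exact mul_le_mul_of_nonneg_right h8 (Real.rpow_nonneg hI0 _)
  · -- cardinality and dimension bounds
    have hceil0 : (0 : ℤ) ≤ ⌈R⌉ := Int.ceil_nonneg hR0
    have hbig : ∀ k : Fin n → ℤ,
        (Γ ∩ Set.Icc (fun i => (k i : ℝ) - R) (fun i => (k i : ℝ) + 1 + R)).Finite ∧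
        (Γ ∩ Set.Icc (fun i => (k i : ℝ) - R) (fun i => (k i : ℝ) + 1 + R)).ncard ≤
          ((2 * ⌈R⌉ + 3).toNat) ^ n * NΓ := by
      intro k
      have hmem : ∀ y ∈ Set.Icc (fun i => (k i : ℝ) - R) (fun i => (k i : ℝ) + 1 + R),
          (fun i => ⌊y i⌋) ∈
            Fintype.piFinset (fun i => Finset.Icc (k i - (⌈R⌉ + 1)) (k i + ⌈R⌉ + 1)) := by
        intro y hy
        rw [Fintype.mem_piFinset]
        intro i
        have h1 : (k i : ℝ) - R ≤ y i := hy.1 i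
        have h2 : y i ≤ (k i : ℝ) + 1 + R := hy.2 i
        have hceil : R ≤ (⌈R⌉ : ℝ) := Int.le_ceil R
        rw [Finset.mem_Icc]
        constructor
        · have hle : ((k i - (⌈R⌉ + 1) : ℤ) : ℝ) ≤ y i := by push_cast; linarith
          exact Int.le_floor.mpr hle
        · have hle : y i ≤ ((k i + ⌈R⌉ + 1 : ℤ) : ℝ) := by push_cast; linarith
          calc ⌊y i⌋ ≤ ⌊((k i + ⌈R⌉ + 1 : ℤ) : ℝ)⌋ := Int.floor_le_floor hle
            _ = k i + ⌈R⌉ + 1 := Int.floor_intCast _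
      have hcc := countCover Γ NΓ hNΓfin hNΓ
        (Set.Icc (fun i => (k i : ℝ) - R) (fun i => (k i : ℝ) + 1 + R))
        (Fintype.piFinset (fun i => Finset.Icc (k i - (⌈R⌉ + 1)) (k i + ⌈R⌉ + 1))) hmem
      have hcard : (Fintype.piFinset
          (fun i => Finset.Icc (k i - (⌈R⌉ + 1)) (k i + ⌈R⌉ + 1))).card =
          ((2 * ⌈R⌉ + 3).toNat) ^ n := by
        rw [Fintype.card_piFinset]
        have hone : ∀ i : Fin n, (Finset.Icc (k i - (⌈R⌉ + 1)) (k i + ⌈R⌉ + 1)).card =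
            (2 * ⌈R⌉ + 3).toNat := by
          intro i
          rw [Int.card_Icc]
          congr 1
          ring
        simp only [hone]
        rw [Finset.prod_const, Finset.card_univ, Fintype.card_fin]
      rw [hcard] at hcc
      exact hcc
    have hMd : Γ ∩ (M \ Ω) ⊆ ⋃ k ∈ s,
        (Γ ∩ Set.Icc (fun i => (k i : ℝ) - R) (fun i => (k i : ℝ) + 1 + R)) := by
      rintro y ⟨hyΓ, hyM, hyΩ⟩
      rw [hMdef] at hyM
      obtain ⟨z, hzfr, hzd⟩ := near_frontier Ω R y hyM hyΩ
      have hz := hscov hzfr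
      rw [Set.mem_iUnion₂] at hz
      obtain ⟨k, hk, hzk⟩ := hz
      rw [Set.mem_iUnion₂]
      refine ⟨k, hk, hyΓ, ?_, ?_⟩
      · intro i
        have h1 : (k i : ℝ) ≤ z i := hzk.1 i
        have h2 := abs_le.mp (hzd i)
        show (k i : ℝ) - R ≤ y i
        linarith [h2.1, h2.2]
      · intro i
        have h1 : z i ≤ (k i : ℝ) + 1 := hzk.2 i
        have h2 := abs_le.mp (hzd i)
        show y i ≤ (k i : ℝ) + 1 + R
        linarith [h2.1, h2.2]
    have hMdfin : (Γ ∩ (M \ Ω)).Finite :=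
      Set.Finite.subset (Set.Finite.biUnion s.finite_toSet (fun k _ => (hbig k).1)) hMd
    have hMdcard : (Γ ∩ (M \ Ω)).ncard ≤ d * (((2 * ⌈R⌉ + 3).toNat) ^ n * NΓ) := by
      set V : Finset (Fin n → ℝ) := s.biUnion (fun k => ((hbig k).1).toFinset) with hV
      have hsubV : Γ ∩ (M \ Ω) ⊆ (V : Set (Fin n → ℝ)) := by
        intro y hy
        have hu := hMd hy
        rw [Set.mem_iUnion₂] at hu
        obtain ⟨k, hk, hyk⟩ := hu
        simp only [hV, Finset.coe_biUnion, Set.mem_iUnion, Finset.mem_coe]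
        exact ⟨k, hk, by rw [Set.Finite.mem_toFinset]; exact hyk⟩
      calc (Γ ∩ (M \ Ω)).ncard ≤ (V : Set (Fin n → ℝ)).ncard :=
            Set.ncard_le_ncard hsubV V.finite_toSet
        _ = V.card := Set.ncard_coe_finset V
        _ ≤ ∑ k ∈ s, ((hbig k).1).toFinset.card := Finset.card_biUnion_le
        _ ≤ ∑ _k ∈ s, ((2 * ⌈R⌉ + 3).toNat) ^ n * NΓ := Finset.sum_le_sum (fun k _ => by
              rw [← Set.ncard_eq_toFinset_card _ (hbig k).1]
              exact (hbig k).2)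
        _ = s.card * (((2 * ⌈R⌉ + 3).toNat) ^ n * NΓ) := by
              rw [Finset.sum_const, smul_eq_mul]
        _ = d * (((2 * ⌈R⌉ + 3).toNat) ^ n * NΓ) := by rw [hscard]
    have hsplit : Γ ∩ M ⊆ (Γ ∩ Ω) ∪ (Γ ∩ (M \ Ω)) := by
      rintro y ⟨h1, h2⟩
      by_cases hy : y ∈ Ω
      · exact Or.inl ⟨h1, hy⟩
      · exact Or.inr ⟨h1, h2, hy⟩
    have hΓMfin : (Γ ∩ M).Finite := Set.Finite.subset (hΓΩfin.union hMdfin) hsplit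
    have hBpow : (((2 * ⌈R⌉ + 3).toNat : ℕ) : ℝ) ≤ 8 * N := by
      have h0 : (0 : ℤ) ≤ 2 * ⌈R⌉ + 3 := by omega
      have hz : (((2 * ⌈R⌉ + 3).toNat : ℕ) : ℝ) = 2 * ((⌈R⌉ : ℤ) : ℝ) + 3 := by
        exact_mod_cast Int.toNat_of_nonneg h0
      rw [hz]
      have hceil : ((⌈R⌉ : ℤ) : ℝ) < R + 1 := Int.ceil_lt_add_one R
      have hR : R = 1 + N / 2 := hRdef
      have hh1 : 2 * ((⌈R⌉ : ℤ) : ℝ) + 3 ≤ 2 * R + 5 := by linarith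
      have hh2 : 2 * R + 5 = N + 7 := by rw [hR]; ring
      have hh3 : N + 7 ≤ 8 * N := by linarith [hN1]
      linarith [hh1, hh2, hh3]
    have hpowN : ((((2 * ⌈R⌉ + 3).toNat) ^ n : ℕ) : ℝ) ≤ 8 ^ n * (K * μ) := by
      push_cast
      calc (((2 * ⌈R⌉ + 3).toNat : ℕ) : ℝ) ^ n ≤ (8 * N) ^ n :=
            pow_le_pow_left₀ (Nat.cast_nonneg _) hBpow n
        _ = 8 ^ n * N ^ n := mul_pow 8 N n
        _ ≤ 8 ^ n * (K * μ) := mul_le_mul_of_nonneg_left hNn (by positivity)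
    have hfinal : ((Γ ∩ M).ncard : ℝ) ≤ (CΓ + (d : ℝ) * (NΓ : ℝ) * 8 ^ n * K + 1) * μ := by
      have h1 : (Γ ∩ M).ncard ≤ (Γ ∩ Ω).ncard + (Γ ∩ (M \ Ω)).ncard :=
        le_trans (Set.ncard_le_ncard hsplit (hΓΩfin.union hMdfin)) (Set.ncard_union_le _ _)
      have h2 : ((Γ ∩ M).ncard : ℝ) ≤ ((Γ ∩ Ω).ncard : ℝ) + ((Γ ∩ (M \ Ω)).ncard : ℝ) := by
        exact_mod_cast h1
      have h3 : ((Γ ∩ (M \ Ω)).ncard : ℝ) ≤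
          (d : ℝ) * (((((2 * ⌈R⌉ + 3).toNat) ^ n : ℕ) : ℝ) * (NΓ : ℝ)) := by
        have := hMdcard
        exact_mod_cast this
      have h4 : ((Γ ∩ (M \ Ω)).ncard : ℝ) ≤ (d : ℝ) * ((8 ^ n * (K * μ)) * (NΓ : ℝ)) := by
        refine le_trans h3 ?_
        refine mul_le_mul_of_nonneg_left ?_ (Nat.cast_nonneg d)
        exact mul_le_mul_of_nonneg_right hpowN (Nat.cast_nonneg NΓ)
      have h5 : (d : ℝ) * ((8 ^ n * (K * μ)) * (NΓ : ℝ)) =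
          (d : ℝ) * (NΓ : ℝ) * 8 ^ n * K * μ := by ring
      have h6 : ((Γ ∩ M).ncard : ℝ) ≤ CΓ * μ + (d : ℝ) * (NΓ : ℝ) * 8 ^ n * K * μ := by
        rw [← h5]
        linarith [hΓΩcard]
      have h7 : CΓ * μ + (d : ℝ) * (NΓ : ℝ) * 8 ^ n * K * μ ≤
          (CΓ + (d : ℝ) * (NΓ : ℝ) * 8 ^ n * K + 1) * μ := by nlinarith [hμ0.le]
      linarith
    refine ⟨hΓMfin, hfinal, ?_⟩
    refine le_trans ?_ hfinal
    exact_mod_cast Nat.cast_le.mpr (finrank_span_le Γ F M hΓMfin)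
end

section
/- Let f : ℝ^n → ℝ (or ℂ) be bounded, let a ∈ (0,1/2], j₀ ∈ ℤ, and for each integer j ≥ j₀ let g_j be a function with ‖f − g_j‖_{L^∞(ℝ^n)} ≤ a(1+a)^j. With U_j, D_j and h = h(f) defined from (g_j) as in the h-construction, the following hold with C₁(a) = 1−a and C₂(a) = (1+a)²: (i) for every x ∈ ℝ^n \ D_{j₀}, C₁(a) h(x) ≤ |f(x)| ≤ C₂(a) h(x); (ii) for every x ∈ D_{j₀}, |f(x)| ≤ C₂(a)(1+a)^{j₀}. -/
open Set

/-- Properties of the `h`-mapping. If `f` is bounded, `a ∈ (0,1/2]`, and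
`g_j` approximates `f` with `‖f − g_j‖_∞ ≤ a(1+a)^j` for `j ≥ j₀`, then with `U_j`, `D_j`, `h`
as in the h-construction: (i) `(1−a)h(x) ≤ |f(x)| ≤ (1+a)²h(x)` off `D_{j₀}`, and
(ii) `|f(x)| ≤ (1+a)²(1+a)^{j₀}` on `D_{j₀}`. -/
theorem statement8
    (n : ℕ) (f : (Fin n → ℝ) → ℝ) (T : ℝ) (hf : ∀ x, |f x| ≤ T)
    (a : ℝ) (ha0 : 0 < a) (ha : a ≤ 1 / 2) (j₀ : ℤ)
    (g : ℤ → (Fin n → ℝ) → ℝ)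
    (hg : ∀ j : ℤ, j₀ ≤ j → ∀ x, |f x - g j x| ≤ a * (1 + a) ^ j)
    -- the h-construction
    (U : ℤ → Set (Fin n → ℝ))
    (hU : ∀ j : ℤ, U j = {x | (1 + a) ^ j ≤ |g j x|})
    (D : ℤ → Set (Fin n → ℝ))
    (hD : ∀ j : ℤ, j₀ < j → D j = U j \ ⋃ (k : ℤ) (_ : j < k), U k)
    (hD0 : D j₀ = Set.univ \ ⋃ (k : ℤ) (_ : j₀ < k), U k)
    (h : (Fin n → ℝ) → ℝ)
    (hh : ∀ x, h x = ∑' j : {j : ℤ // j₀ < j},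
      (1 + a) ^ (j : ℤ) * Set.indicator (D (j : ℤ)) (fun _ => (1 : ℝ)) x) :
    (∀ x ∉ D j₀, (1 - a) * h x ≤ |f x| ∧ |f x| ≤ (1 + a) ^ 2 * h x) ∧
    (∀ x ∈ D j₀, |f x| ≤ (1 + a) ^ 2 * (1 + a) ^ j₀) := by
  have ha1 : (1:ℝ) < 1 + a := by linarith
  have hb0 : (0:ℝ) < 1 + a := by linarith
  have hpos : ∀ j : ℤ, (0:ℝ) < (1+a)^j := fun j => zpow_pos hb0 j
  have key_lower : ∀ (m : ℤ), j₀ ≤ m → ∀ x, x ∈ U m → (1-a) * (1+a)^m ≤ |f x| := by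
    intro m hm x hx
    rw [hU] at hx
    have hx' : (1+a)^m ≤ |g m x| := hx
    have h1 := hg m hm x
    have h2 : |g m x| - |f x| ≤ |f x - g m x| := by
      have := abs_sub_abs_le_abs_sub (g m x) (f x)
      rw [abs_sub_comm] at this; linarith
    nlinarith [hpos m]
  have key_upper : ∀ (m : ℤ), j₀ ≤ m → ∀ x, x ∉ U (m+1) → |f x| ≤ (1+a)^2 * (1+a)^m := by
    intro m hm x hx
    rw [hU] at hx
    simp only [Set.mem_setOf_eq, not_le] at hx
    have h1 := hg (m+1) (by omega) x
    have h2 : |f x| - |g (m+1) x| ≤ |f x - g (m+1) x| := abs_sub_abs_le_abs_sub _ _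
    have hz : (1+a)^(m+1) = (1+a) * (1+a)^m := by
      rw [zpow_add_one₀ (by linarith)]; ring
    have hsq : ((1+a):ℝ)^2 = (1+a)*(1+a) := by ring
    nlinarith [hpos m]
  constructor
  · intro x hx
    -- x lies in some U k with k > j₀
    have hxU : x ∈ ⋃ (k : ℤ) (_ : j₀ < k), U k := by
      by_contra hc
      exact hx (by rw [hD0]; exact ⟨mem_univ x, hc⟩)
    obtain ⟨k0, hk0, hk0U⟩ := mem_iUnion₂.mp hxU
    -- set of indices is bounded above
    have hbdd : ∃ b : ℤ, ∀ z : ℤ, (j₀ < z ∧ x ∈ U z) → z ≤ b := by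
      obtain ⟨N, hN⟩ := pow_unbounded_of_one_lt (T / (1 - a)) ha1
      refine ⟨(N : ℤ), fun z ⟨hz1, hz2⟩ => ?_⟩
      rw [hU] at hz2
      have hz2' : (1+a)^z ≤ |g z x| := hz2
      have h1 := hg z hz1.le x
      have h2 : |g z x| - |f x| ≤ |f x - g z x| := by
        have := abs_sub_abs_le_abs_sub (g z x) (f x)
        rw [abs_sub_comm] at this; linarith
      have hfx := hf x
      have h1a : (0:ℝ) < 1 - a := by linarith
      have hle : (1 - a) * (1+a)^z ≤ T := by nlinarith
      have hle2 : (1+a)^z ≤ T / (1-a) := by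
        rw [le_div_iff₀ h1a]; nlinarith
      have : ((1+a):ℝ)^z < (1+a)^(N:ℤ) := by
        calc ((1+a):ℝ)^z ≤ T / (1-a) := hle2
        _ < (1+a)^N := hN
        _ = (1+a)^(N:ℤ) := (zpow_natCast _ _).symm
      exact le_of_lt ((zpow_lt_zpow_iff_right₀ ha1).mp this)
    obtain ⟨m, ⟨hmj, hmU⟩, hmax⟩ :=
      Int.exists_greatest_of_bdd hbdd ⟨k0, hk0, hk0U⟩
    have hnot : ∀ k : ℤ, m < k → x ∉ U k := by
      intro k hk hkU
      have : k ≤ m := hmax k ⟨lt_trans hmj hk, hkU⟩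
      omega
    have hDx : x ∈ D m := by
      rw [hD m hmj]
      refine ⟨hmU, ?_⟩
      intro hmem
      obtain ⟨k, hk, hkU⟩ := mem_iUnion₂.mp hmem
      exact hnot k hk hkU
    have hhx : h x = (1+a)^m := by
      rw [hh x]
      have heq := tsum_eq_single (L := SummationFilter.unconditional _) (f := fun j : {j : ℤ // j₀ < j} =>
        (1+a)^(j : ℤ) * Set.indicator (D (j : ℤ)) (fun _ => (1:ℝ)) x) ⟨m, hmj⟩ ?_
      · rw [heq, Set.indicator_of_mem hDx]; ring
      · rintro ⟨j, hj⟩ hne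
        have hjm : j ≠ m := fun hc => hne (by simpa using hc)
        have hxD : x ∉ D j := by
          rw [hD j hj]
          rcases lt_or_gt_of_ne hjm with hlt | hgt
          · intro hmem
            exact hmem.2 (mem_iUnion₂.mpr ⟨m, hlt, hmU⟩)
          · intro hmem
            exact hnot j hgt hmem.1
        simp [Set.indicator_of_notMem hxD]
    rw [hhx]
    exact ⟨key_lower m hmj.le x hmU, key_upper m hmj.le x (hnot (m+1) (by omega))⟩
  · intro x hx
    rw [hD0] at hx
    have : x ∉ U (j₀ + 1) := fun hc => hx.2 (mem_iUnion₂.mpr ⟨j₀+1, by omega, hc⟩)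
    exact key_upper j₀ le_rfl x this
end
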